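/- If the temporal dependency graph of a program Π does not contain a path passing infinitely many times through edges labeled with '−' (negation), then Π is T-stratified, i.e., its temporal closure Π↓ admits a stratification. -/

import Mathlib

/-- A normal temporal rule, normalized so that the head is `p(T)`: a head
predicate together with body literals `(q, k, s)` standing for `q(T + k)`,
negated iff `s = true`.  A program is a finite set of such rules. -/
abbrev TRule (P : Type) : Type := P × List (P × ℤ × Bool)

/-- A stratification of the temporal closure `Π↓` of `Π`: a stratum assignment
on the instantiated predicates `p_t` such that, for every rule instance,
positive body dependencies stay in the same or a lower stratum and negative
dependencies go to a strictly lower stratum.  -/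
def IsTStratification {P : Type} (Prg : Finset (TRule P)) (strat : P × ℕ → ℕ) : Prop :=
  ∀ r ∈ Prg, ∀ t : ℕ, ∀ b ∈ r.2, ∀ t' : ℕ, (t : ℤ) + b.2.1 = (t' : ℤ) →
    (b.2.2 = false → strat (b.1, t') ≤ strat (r.1, t)) ∧
    (b.2.2 = true → strat (b.1, t') < strat (r.1, t))

/-- A single (sign-labeled) edge of the (projected) dependency graph:
`p` is the head of a rule with a body literal on `q` with sign `s`. -/
def TStep {P : Type} (Prg : Finset (TRule P)) (s : Bool) (p q : P) : Prop :=
  ∃ r ∈ Prg, r.1 = p ∧ ∃ b ∈ r.2, b.1 = q ∧ b.2.2 = s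

/-- An edge of either sign. -/
def TAnyStep {P : Type} (Prg : Finset (TRule P)) (p q : P) : Prop :=
  TStep Prg false p q ∨ TStep Prg true p q

/-- Reachability in the dependency graph. -/
def TReach {P : Type} (Prg : Finset (TRule P)) : P → P → Prop :=
  Relation.ReflTransGen (TAnyStep Prg)

/-- `q` is reachable from `p` along a path using at least one negative edge. -/
def TNegR {P : Type} (Prg : Finset (TRule P)) (p q : P) : Prop :=
  ∃ a b, TReach Prg p a ∧ TStep Prg true a b ∧ TReach Prg b q

theorem TNegR.head_of_step {P : Type} {Prg : Finset (TRule P)} {s : Bool} {p q x : P}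
    (hst : TStep Prg s p q) (h : TNegR Prg q x) : TNegR Prg p x := by
  obtain ⟨a, b, h1, h2, h3⟩ := h
  refine ⟨a, b, Relation.ReflTransGen.head ?_ h1, h2, h3⟩
  cases s
  · exact Or.inl hst
  · exact Or.inr hst

/-- Key lemma: if there is no infinite path through infinitely many negative
edges, then no node negatively reaches itself. -/
theorem list_getD_eq_getElem {α : Type*} (l : List α) (d : α) (i : ℕ) (h : i < l.length) :
    l.getD i d = l[i]'h := by
  simp [List.getD_eq_getElem?_getD, List.getElem?_eq_getElem h]

/-- Key lemma: if there is no infinite path through infinitely many negative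
edges, then no node negatively reaches itself. -/
theorem TNegR_irrefl {P : Type} (Prg : Finset (TRule P))
    (hnopath : ¬ ∃ (f : ℕ → P × ℤ) (s : ℕ → Bool),
      (∀ n, ∃ r ∈ Prg, (f n).1 = r.1 ∧ ∃ b ∈ r.2,
        (f (n + 1)).1 = b.1 ∧ (f (n + 1)).2 = (f n).2 + b.2.1 ∧ s n = b.2.2) ∧
      {n | s n = true}.Infinite) (q : P) : ¬ TNegR Prg q q := by
  classical
  rintro ⟨a, b, h1, h2, h3⟩
  -- a cycle: a →⁻ b →* a
  have hba : TReach Prg b a := h3.trans h1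
  obtain ⟨l, hl, hlast⟩ := List.exists_isChain_cons_of_relationReflTransGen hba
  -- the cycle as a list of vertices, starting at `a` and ending at `a`
  set c : List P := a :: b :: l with hc
  have hchain : List.Chain' (TAnyStep Prg) c := List.isChain_cons_cons.mpr ⟨Or.inr h2, hl⟩
  have hclen : c.length = l.length + 2 := by simp [hc]
  set m : ℕ := l.length + 1 with hm
  have hmpos : 0 < m := by omega
  have hmc : m < c.length := by omega
  -- the vertex sequence of the infinite path (total indexing with default `a`)
  set v : ℕ → P := fun n => c.getD (n % m) a with hv
  have hga : c.getD m a = a := by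
    have h5 : c.getLast (List.cons_ne_nil _ _) = a := by
      show (a :: b :: l).getLast (List.cons_ne_nil _ _) = a
      rw [List.getLast_cons_cons]
      exact hlast
    rw [List.getLast_eq_getElem] at h5
    rw [list_getD_eq_getElem c a m hmc]
    have him : c.length - 1 = m := by omega
    rw [← him] at *
    exact h5
  have hg0 : c.getD 0 a = a := rfl
  have hg1 : c.getD 1 a = b := rfl
  have hnext : ∀ n : ℕ, v (n + 1) = c.getD (n % m + 1) a := by
    intro n
    rcases Nat.lt_or_ge (n % m + 1) m with h | h
    · have h1m : 1 % m = 1 := Nat.mod_eq_of_lt (by omega)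
      have he : (n + 1) % m = n % m + 1 := by
        rw [Nat.add_mod, h1m, Nat.mod_eq_of_lt h]
      rw [hv]
      simp only [he]
    · have he : n % m + 1 = m := by have := Nat.mod_lt n hmpos; omega
      have h0 : (n + 1) % m = 0 := by
        have hd := Nat.div_add_mod n m
        have hd' : n / m * m = m * (n / m) := Nat.mul_comm _ _
        have hsum : n + 1 = (n / m + 1) * m := by
          rw [Nat.add_mul, Nat.one_mul]
          omega
        rw [hsum, Nat.mul_mod_left]
      rw [hv]
      simp only [h0, he]
      rw [hg0, hga]
  have hstep : ∀ n, TAnyStep Prg (v n) (v (n + 1)) := by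
    intro n
    have hi : n % m < c.length - 1 := by have := Nat.mod_lt n hmpos; omega
    have hstep' := List.isChain_iff_getElem.mp hchain (n % m) (by omega)
    rw [hnext n]
    show TAnyStep Prg (c.getD (n % m) a) (c.getD (n % m + 1) a)
    rw [list_getD_eq_getElem c a (n % m) (by omega),
      list_getD_eq_getElem c a (n % m + 1) (by omega)]
    exact hstep'
  have hneg : ∀ k : ℕ, TStep Prg true (v (k * m)) (v (k * m + 1)) := by
    intro k
    have h0 : (k * m) % m = 0 := Nat.mul_mod_left k m
    have e1 : v (k * m) = a := by rw [hv]; simp only [h0]; exact hg0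
    have e2 : v (k * m + 1) = b := by
      rw [hnext (k * m), h0]
      exact hg1
    rw [e1, e2]
    exact h2
  -- signs of the path
  set s : ℕ → Bool := fun n => decide (TStep Prg true (v n) (v (n + 1))) with hsdef
  have hs : ∀ n, TStep Prg (s n) (v n) (v (n + 1)) := by
    intro n
    by_cases h : TStep Prg true (v n) (v (n + 1))
    · have : s n = true := by simp [hsdef, h]
      rw [this]; exact h
    · have : s n = false := by simp [hsdef, h]
      rw [this]
      rcases hstep n with h' | h'
      · exact h'
      · exact absurd h' h
  have hsk : ∀ k : ℕ, s (k * m) = true := fun k => by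
    simp [hsdef, hneg k]
  have hinf : {n | s n = true}.Infinite := by
    refine Set.infinite_of_injective_forall_mem (f := fun k : ℕ => k * m) ?_ ?_
    · intro k1 k2 h
      exact Nat.eq_of_mul_eq_mul_right hmpos h
    · intro k; exact hsk k
  -- offsets
  have hQ : ∀ n, ∃ kk : ℤ, ∃ r ∈ Prg, r.1 = v n ∧
      ∃ bb ∈ r.2, bb.1 = v (n + 1) ∧ bb.2.1 = kk ∧ bb.2.2 = s n := by
    intro n
    obtain ⟨r, hr, hr1, bb, hbb, hb1, hb2⟩ := hs n
    exact ⟨bb.2.1, r, hr, hr1, bb, hbb, hb1, rfl, hb2⟩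
  choose K hK using hQ
  apply hnopath
  refine ⟨fun n => (v n, ((List.range n).map K).sum), s, fun n => ?_, hinf⟩
  obtain ⟨r, hr, hr1, bb, hbb, hb1, hbk, hb2⟩ := hK n
  refine ⟨r, hr, hr1.symm, bb, hbb, hb1.symm, ?_, hb2.symm⟩
  simp [List.range_succ, hbk]

theorem stmt_17 {P : Type} [Fintype P] (Prg : Finset (TRule P))
    (hnopath : ¬ ∃ (f : ℕ → P × ℤ) (s : ℕ → Bool),
      (∀ n, ∃ r ∈ Prg, (f n).1 = r.1 ∧ ∃ b ∈ r.2,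
        (f (n + 1)).1 = b.1 ∧ (f (n + 1)).2 = (f n).2 + b.2.1 ∧ s n = b.2.2) ∧
      {n | s n = true}.Infinite) :
    ∃ strat : P × ℕ → ℕ, IsTStratification Prg strat := by
  classical
  refine ⟨fun pt => {x | TNegR Prg pt.1 x}.ncard, ?_⟩
  intro r hr t b hb t' _
  constructor
  · intro hfalse
    have hst : TStep Prg false r.1 b.1 := ⟨r, hr, rfl, b, hb, rfl, hfalse⟩
    apply Set.ncard_le_ncard _ (Set.toFinite _)
    intro x hx
    exact TNegR.head_of_step hst hx
  · intro htrue
    have hst : TStep Prg true r.1 b.1 := ⟨r, hr, rfl, b, hb, rfl, htrue⟩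
    apply Set.ncard_lt_ncard _ (Set.toFinite _)
    show {x | TNegR Prg b.1 x} ⊂ {x | TNegR Prg r.1 x}
    have hsubset : {x | TNegR Prg b.1 x} ⊆ {x | TNegR Prg r.1 x} :=
      fun x hx => TNegR.head_of_step hst hx
    rw [Set.ssubset_iff_of_subset hsubset]
    exact ⟨b.1, ⟨r.1, b.1, Relation.ReflTransGen.refl, hst, Relation.ReflTransGen.refl⟩,
      TNegR_irrefl Prg hnopath b.1⟩
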